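/- For τ ∈ (0,1) and 0 < ε < (1/2)·min(τ,1-τ), the maximum Bayesian log-update magnitude satisfies max(lg d₁₀ - lg d₀₀, lg d₀₁ - lg d₁₁) ≤ K·ε/(τ(1-τ)) for an absolute constant K (e.g. K = 6), where d₁₀=(τ+ε)/(τ+(2q-1)ε), d₀₀=(1-τ-ε)/(1-τ-(2q-1)ε), d₀₁=(1-τ+ε)/(1-τ-(2q-1)ε), d₁₁=(τ-ε)/(τ+(2q-1)ε), and q ∈ [0,1]. -/

import Mathlib

lemma key_logb_bound (a ε : ℝ) (ha : 0 < a) (hε : 0 < ε) (h : 2 * ε < a) :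
    Real.logb 2 ((a + ε) / (a - ε)) ≤ 6 * ε / a := by
  have haε : 0 < a - ε := by linarith
  have hlog : Real.log ((a + ε) / (a - ε)) ≤ 3 * ε / a := by
    have e1 : Real.log ((a + ε) / (a - ε)) =
        Real.log ((a + ε) / a) + Real.log (a / (a - ε)) := by
      rw [← Real.log_mul (by positivity) (by positivity)]
      congr 1
      field_simp
    have l1 : Real.log ((a + ε) / a) ≤ ε / a := by
      have := Real.log_le_sub_one_of_pos (show (0:ℝ) < (a + ε) / a by positivity)
      have e : (a + ε) / a - 1 = ε / a := by field_simp; ring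
      linarith
    have l2 : Real.log (a / (a - ε)) ≤ 2 * ε / a := by
      have := Real.log_le_sub_one_of_pos (show (0:ℝ) < a / (a - ε) by positivity)
      have e : a / (a - ε) - 1 = ε / (a - ε) := by field_simp; ring
      have l3 : ε / (a - ε) ≤ 2 * ε / a := by
        rw [div_le_div_iff₀ haε ha]
        nlinarith
      linarith
    have e2 : ε / a + 2 * ε / a = 3 * ε / a := by ring
    rw [e1]; linarith
  have hlog2 : (1:ℝ)/2 ≤ Real.log 2 := by
    have := Real.log_two_gt_d9
    linarith
  have hpos : 0 ≤ 3 * ε / a := by positivity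
  rw [Real.logb, div_le_iff₀ (by linarith : (0:ℝ) < Real.log 2)]
  calc Real.log ((a + ε) / (a - ε)) ≤ 3 * ε / a := hlog
    _ = (6 * ε / a) * (1/2) := by ring
    _ ≤ (6 * ε / a) * Real.log 2 := by
        apply mul_le_mul_of_nonneg_left hlog2 (by positivity)

theorem update_magnitude_bound (τ ε q : ℝ)
    (hτ0 : 0 < τ) (hτ1 : τ < 1) (hε0 : 0 < ε) (hε : ε < (1/2) * min τ (1 - τ))
    (hq : q ∈ Set.Icc (0 : ℝ) 1) :
    max (Real.logb 2 ((τ + ε) / (τ + (2 * q - 1) * ε))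
          - Real.logb 2 ((1 - τ - ε) / (1 - τ - (2 * q - 1) * ε)))
        (Real.logb 2 ((1 - τ + ε) / (1 - τ - (2 * q - 1) * ε))
          - Real.logb 2 ((τ - ε) / (τ + (2 * q - 1) * ε))) ≤
      6 * ε / (τ * (1 - τ)) := by
  obtain ⟨hq0, hq1⟩ := hq
  have hm1 : min τ (1 - τ) ≤ τ := min_le_left _ _
  have hm2 : min τ (1 - τ) ≤ 1 - τ := min_le_right _ _
  have h1 : 2 * ε < τ := by linarith
  have h2 : 2 * ε < 1 - τ := by linarith
  set c := (2 * q - 1) * ε with hc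
  have hc1 : -ε ≤ c := by nlinarith
  have hc2 : c ≤ ε := by nlinarith
  have hτε : 0 < τ - ε := by linarith
  have h1τε : 0 < 1 - τ - ε := by linarith
  have hτc : 0 < τ + c := by linarith
  have h1τc : 0 < 1 - τ - c := by linarith
  have key1 := key_logb_bound τ ε hτ0 hε0 h1
  have key2 := key_logb_bound (1 - τ) ε (by linarith) hε0 h2
  have hsum : 6 * ε / τ + 6 * ε / (1 - τ) = 6 * ε / (τ * (1 - τ)) := by
    rw [div_add_div _ _ hτ0.ne' (show (1:ℝ) - τ ≠ 0 by linarith)]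
    congr 1
    ring
  -- bounds on the four logb terms
  have bX1 : Real.logb 2 ((τ + ε) / (τ + c)) ≤ 6 * ε / τ := by
    refine le_trans (Real.logb_le_logb_of_le one_lt_two (div_pos (by linarith) hτc) ?_) key1
    exact div_le_div_of_nonneg_left (by linarith) hτε (by linarith)
  have bY1 : -Real.logb 2 ((1 - τ - ε) / (1 - τ - c)) ≤ 6 * ε / (1 - τ) := by
    rw [← Real.logb_inv, inv_div]
    refine le_trans (Real.logb_le_logb_of_le one_lt_two (div_pos h1τc h1τε) ?_) key2
    exact (div_le_div_iff_of_pos_right h1τε).mpr (by linarith)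
  have bX2 : Real.logb 2 ((1 - τ + ε) / (1 - τ - c)) ≤ 6 * ε / (1 - τ) := by
    refine le_trans (Real.logb_le_logb_of_le one_lt_two (div_pos (by linarith) h1τc) ?_) key2
    exact div_le_div_of_nonneg_left (by linarith) h1τε (by linarith)
  have bY2 : -Real.logb 2 ((τ - ε) / (τ + c)) ≤ 6 * ε / τ := by
    rw [← Real.logb_inv, inv_div]
    refine le_trans (Real.logb_le_logb_of_le one_lt_two (div_pos hτc hτε) ?_) key1
    exact (div_le_div_iff_of_pos_right hτε).mpr (by linarith)
  apply max_le <;> linarith
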